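/- Let (X,0) be a rational surface singularity (i.e., χ(l) > 0 for all l > 0 in L, where χ(l) = −(l, l+K)/2). Then for any effective cycle l > 0 there exists a component E_j of the support of l with (E_j, l + K) < 0. -/
import Mathlib


open Matrix

variable {J : Type*}

/-- The rational bilinear (intersection) form associated with the integral matrix `B`. -/
def bform [Fintype J] (B : Matrix J J ℤ) (x y : J → ℚ) : ℚ :=
  x ⬝ᵥ (B.map (fun n => (n : ℚ))).mulVec y

/-- `B` is negative definite as a rational quadratic form. -/
def NegDef [Fintype J] (B : Matrix J J ℤ) : Prop :=
  ∀ x : J → ℚ, x ≠ 0 → bform B x x < 0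

/-- Membership in the lattice `L` (integral coordinates in the basis `E_j`). -/
def isLat (x : J → ℚ) : Prop := ∀ j, ∃ m : ℤ, x j = (m : ℚ)

/-- Membership in the dual lattice `L' ⊂ L ⊗ ℚ`. -/
def isDual [Fintype J] [DecidableEq J] (B : Matrix J J ℤ) (x : J → ℚ) : Prop :=
  ∀ j, ∃ m : ℤ, bform B x (Pi.single j 1) = (m : ℚ)

/-- Membership in the anti-nef cone `NE_ℚ = {x : (x,E_j) ≥ 0 ∀ j}`. -/
def inNE [Fintype J] [DecidableEq J] (B : Matrix J J ℤ) (x : J → ℚ) : Prop :=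
  ∀ j, 0 ≤ bform B x (Pi.single j 1)

/-- Effective rational cycles: all coordinates nonnegative. -/
def Effective (x : J → ℚ) : Prop := ∀ j, 0 ≤ x j

/-- `χ(x) = -(x, x+K)/2` (Riemann–Roch). -/
def chi [Fintype J] (B : Matrix J J ℤ) (K x : J → ℚ) : ℚ := -(bform B x (x + K)) / 2

/-- for a rational singularity, every effective cycle `l > 0` has a
component `E_j` of its support with `(E_j, l + K) < 0`. -/
theorem stmt10 {J : Type*} [Fintype J] [DecidableEq J]
    (B : Matrix J J ℤ)
    (hsym : B.IsSymm)
    (hneg : NegDef B)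
    (K : J → ℚ) (hKdual : isDual B K)
    (hK : ∀ j, bform B K (Pi.single j 1) = -(B j j : ℚ) - 2)
    -- rationality: `χ(l) > 0` for all `l ∈ L`, `l > 0`
    (hrat : ∀ l : J → ℚ, isLat l → Effective l → l ≠ 0 → 0 < chi B K l) :
    ∀ l : J → ℚ, isLat l → Effective l → l ≠ 0 →
      ∃ j, 0 < l j ∧ bform B (Pi.single j 1) (l + K) < 0 := by
  intro l hlat heff hne
  by_contra h
  push_neg at h
  have hterm : ∀ j, 0 ≤ l j * ((B.map (fun n => (n : ℚ))).mulVec (l + K)) j := by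
    intro j
    rcases (heff j).lt_or_eq with hpos | hzero
    · have hb : bform B (Pi.single j 1) (l + K)
          = ((B.map (fun n => (n : ℚ))).mulVec (l + K)) j := by
        simp [bform]
      exact mul_nonneg hpos.le (hb ▸ h j hpos)
    · rw [← hzero]; simp
  have hsum : 0 ≤ bform B l (l + K) := by
    unfold bform dotProduct
    exact Finset.sum_nonneg fun j _ => hterm j
  have hchi := hrat l hlat heff hne
  unfold chi at hchi
  linarith
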